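/- arXiv:1302.4776 — 2 statements merged into one kernel-verified Lean document; each statement's English description precedes it below -/
import Mathlib

section
/- (Asymptotic efficiency in Theorem 3.) Fix full-support probability distributions μ ≠ π on 𝒴. For each M ≥ 3, let V*(M) be the minimum of D(q_1‖μ) + D(q_2‖π) + … + D(q_M‖π) over all M-tuples of probability distributions (q_1,…,q_M) on 𝒴 satisfying Σ_{j≠1} D( q_j ‖ (Σ_{k≠1} q_k)/(M−1) ) ≥ Σ_{j≠2} D( q_j ‖ (Σ_{k≠2} q_k)/(M−1) ). Then lim_{M→∞} V*(M) = 2·B(μ, π). -/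
open Filter Finset Topology

noncomputable section

/-- `p` is a probability distribution on the finite alphabet. -/
def IsProb {𝓨 : Type} [Fintype 𝓨] (p : 𝓨 → ℝ) : Prop :=
  (∀ y, 0 ≤ p y) ∧ ∑ y, p y = 1

/-- `p` has full support. -/
def FullSupport {𝓨 : Type} (p : 𝓨 → ℝ) : Prop := ∀ y, 0 < p y

/-- Relative entropy `D(q‖p)` (natural log, convention `0·log 0 = 0`,
which holds since `Real.log 0 = 0` in Mathlib). -/
def KL {𝓨 : Type} [Fintype 𝓨] (q p : 𝓨 → ℝ) : ℝ :=
  ∑ y, q y * Real.log (q y / p y)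

/-- Bhattacharyya distance `B(p,q) = -log ∑ √(p y) √(q y)`. -/
def Bhat {𝓨 : Type} [Fintype 𝓨] (p q : 𝓨 → ℝ) : ℝ :=
  - Real.log (∑ y, Real.sqrt (p y) * Real.sqrt (q y))

/-- The feasible values of the optimization problem in Theorem 2: tuples
`(q_1, …, q_M)` of distributions (indexed here by `0, …, M-1`) satisfying
`∑_{j≠1} D(q_j ‖ (∑_{k≠1} q_k)/(M-1)) ≥ ∑_{j≠2} D(q_j ‖ (∑_{k≠2} q_k)/(M-1))`,
with objective `D(q_1‖μ) + D(q_2‖π) + … + D(q_M‖π)`. -/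
def VstarSet {𝓨 : Type} [Fintype 𝓨] (μ π : 𝓨 → ℝ) (M : ℕ) : Set ℝ :=
  {x | ∃ q : ℕ → 𝓨 → ℝ, (∀ j < M, IsProb (q j)) ∧
    (∑ j ∈ Finset.range M \ {0}, KL (q j)
        (fun a => (∑ k ∈ Finset.range M \ {0}, q k a) / ((M : ℝ) - 1)) ≥
     ∑ j ∈ Finset.range M \ {1}, KL (q j)
        (fun a => (∑ k ∈ Finset.range M \ {1}, q k a) / ((M : ℝ) - 1))) ∧
    x = KL (q 0) μ + ∑ j ∈ Finset.range M \ {0}, KL (q j) π}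

lemma kl_ge_sub {𝓨 : Type} [Fintype 𝓨] {q p : 𝓨 → ℝ}
    (hq : ∀ y, 0 ≤ q y) (hp : ∀ y, 0 ≤ p y) (hs : ∀ y, 0 < q y → 0 < p y) :
    (∑ y, q y) - (∑ y, p y) ≤ KL q p := by
  rw [KL, ← Finset.sum_sub_distrib]
  apply Finset.sum_le_sum
  intro y _
  rcases eq_or_lt_of_le (hq y) with h | h
  · simp [← h, hp y]
  · have hpy := hs y h
    have hlog : Real.log (p y / q y) ≤ p y / q y - 1 :=
      Real.log_le_sub_one_of_pos (by positivity)
    have h1 : Real.log (q y / p y) = - Real.log (p y / q y) := by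
      rw [← Real.log_inv]; congr 1; field_simp
    rw [h1]
    have h2 := mul_le_mul_of_nonneg_left hlog (le_of_lt h)
    have h3 : q y * (p y / q y - 1) = p y - q y := by field_simp
    linarith

lemma kl_nonneg {𝓨 : Type} [Fintype 𝓨] {q p : 𝓨 → ℝ}
    (hq : ∀ y, 0 ≤ q y) (hp : ∀ y, 0 ≤ p y) (hs : ∀ y, 0 < q y → 0 < p y)
    (hq1 : ∑ y, q y = 1) (hp1 : ∑ y, p y ≤ 1) : 0 ≤ KL q p := by
  have := kl_ge_sub hq hp hs
  rw [hq1] at this; linarith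

/-- pointwise Hellinger-KL bound. -/

lemma hellinger_point {a b : ℝ} (ha : 0 ≤ a) (hb : 0 < b) :
    (Real.sqrt a - Real.sqrt b) ^ 2 ≤ a * Real.log (a / b) - a + b := by
  rcases eq_or_lt_of_le ha with h | h
  · simp [← h, Real.sq_sqrt hb.le]
  · have hs : (0:ℝ) < Real.sqrt (b / a) := Real.sqrt_pos.2 (by positivity)
    have hlog : Real.log (Real.sqrt (b / a)) ≤ Real.sqrt (b / a) - 1 :=
      Real.log_le_sub_one_of_pos hs
    have hab : Real.log (a / b) = - 2 * Real.log (Real.sqrt (b / a)) := by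
      rw [Real.log_sqrt (by positivity), Real.log_div h.ne' hb.ne',
        Real.log_div hb.ne' h.ne']; ring
    have hsab : a * Real.sqrt (b / a) = Real.sqrt (a * b) := by
      rw [← Real.sqrt_sq h.le] ; rw [← Real.sqrt_mul (by positivity)]
      congr 1; simp only [Real.sqrt_sq h.le]; field_simp
    have key : 2 * a - 2 * Real.sqrt (a * b) ≤ a * Real.log (a / b) := by
      rw [hab]
      have := mul_le_mul_of_nonneg_left hlog h.le
      nlinarith [hsab]
    have hexp : (Real.sqrt a - Real.sqrt b) ^ 2 = a + b - 2 * Real.sqrt (a * b) := by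
      rw [sub_sq, Real.sq_sqrt ha, Real.sq_sqrt hb.le, Real.sqrt_mul ha]
      ring
    linarith

lemma l1_le_two_sqrt_kl {𝓨 : Type} [Fintype 𝓨] {q p : 𝓨 → ℝ}
    (hq : ∀ y, 0 ≤ q y) (hp : ∀ y, 0 < p y)
    (hq1 : ∑ y, q y = 1) (hp1 : ∑ y, p y = 1) :
    ∑ y, |q y - p y| ≤ 2 * Real.sqrt (KL q p) := by
  have hH : ∑ y, (Real.sqrt (q y) - Real.sqrt (p y)) ^ 2 ≤ KL q p := by
    have h1 : ∑ y, (Real.sqrt (q y) - Real.sqrt (p y)) ^ 2 ≤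
        ∑ y, (q y * Real.log (q y / p y) - q y + p y) :=
      Finset.sum_le_sum fun y _ => by
        have := hellinger_point (hq y) (hp y); linarith
    have h2 : ∑ y, (q y * Real.log (q y / p y) - q y + p y) = KL q p := by
      rw [KL]
      rw [Finset.sum_add_distrib, Finset.sum_sub_distrib, hq1, hp1]
      ring
    linarith
  have habs : ∀ y, |q y - p y| =
      |Real.sqrt (q y) - Real.sqrt (p y)| * (Real.sqrt (q y) + Real.sqrt (p y)) := by
    intro y
    have h1 : q y - p y = (Real.sqrt (q y) - Real.sqrt (p y)) *
        (Real.sqrt (q y) + Real.sqrt (p y)) := by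
      have := Real.sq_sqrt (hq y); have := Real.sq_sqrt (hp y).le; nlinarith
    rw [h1, abs_mul, abs_of_nonneg (show (0:ℝ) ≤ Real.sqrt (q y) + Real.sqrt (p y) by positivity)]
  calc ∑ y, |q y - p y|
      = ∑ y, |Real.sqrt (q y) - Real.sqrt (p y)| * (Real.sqrt (q y) + Real.sqrt (p y)) := by
        exact Finset.sum_congr rfl fun y _ => habs y
    _ ≤ Real.sqrt (∑ y, |Real.sqrt (q y) - Real.sqrt (p y)| ^ 2) *
        Real.sqrt (∑ y, (Real.sqrt (q y) + Real.sqrt (p y)) ^ 2) :=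
        Real.sum_mul_le_sqrt_mul_sqrt _ _ _
    _ ≤ Real.sqrt (KL q p) * Real.sqrt 4 := by
        apply mul_le_mul
        · apply Real.sqrt_le_sqrt
          simpa [sq_abs] using hH
        · apply Real.sqrt_le_sqrt
          have : ∀ y : 𝓨, (Real.sqrt (q y) + Real.sqrt (p y)) ^ 2 ≤ 2 * q y + 2 * p y := by
            intro y
            have h1 := Real.sq_sqrt (hq y); have h2 := Real.sq_sqrt (hp y).le
            nlinarith [sq_nonneg (Real.sqrt (q y) - Real.sqrt (p y))]
          calc ∑ y, (Real.sqrt (q y) + Real.sqrt (p y)) ^ 2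
              ≤ ∑ y, (2 * q y + 2 * p y) := Finset.sum_le_sum fun y _ => this y
            _ = 4 := by rw [Finset.sum_add_distrib, ← Finset.mul_sum, ← Finset.mul_sum,
                hq1, hp1]; norm_num
        · positivity
        · positivity
    _ = 2 * Real.sqrt (KL q p) := by
        rw [show (4:ℝ) = 2^2 by norm_num, Real.sqrt_sq (by norm_num)]; ring

lemma Zpos {𝓨 : Type} [Fintype 𝓨] [Nonempty 𝓨] {μ π : 𝓨 → ℝ}
    (hμf : ∀ y, 0 < μ y) (hπf : ∀ y, 0 < π y) :
    0 < ∑ y, Real.sqrt (μ y) * Real.sqrt (π y) :=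
  Finset.sum_pos (fun y _ => by
    have := hμf y; have := hπf y; positivity) Finset.univ_nonempty

lemma g_pos {𝓨 : Type} [Fintype 𝓨] [Nonempty 𝓨] {μ π : 𝓨 → ℝ}
    (hμf : ∀ y, 0 < μ y) (hπf : ∀ y, 0 < π y) (y : 𝓨) :
    0 < Real.sqrt (μ y) * Real.sqrt (π y) / (∑ y, Real.sqrt (μ y) * Real.sqrt (π y)) := by
  have := Zpos hμf hπf; have := hμf y; have := hπf y; positivity

lemma g_sum {𝓨 : Type} [Fintype 𝓨] [Nonempty 𝓨] {μ π : 𝓨 → ℝ}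
    (hμf : ∀ y, 0 < μ y) (hπf : ∀ y, 0 < π y) :
    ∑ y, Real.sqrt (μ y) * Real.sqrt (π y) / (∑ y, Real.sqrt (μ y) * Real.sqrt (π y)) = 1 := by
  rw [← Finset.sum_div, div_self (Zpos hμf hπf).ne']

lemma kl_two_identity {𝓨 : Type} [Fintype 𝓨] [Nonempty 𝓨] {μ π : 𝓨 → ℝ}
    (hμf : ∀ y, 0 < μ y) (hπf : ∀ y, 0 < π y)
    {q : 𝓨 → ℝ} (hq : ∀ y, 0 ≤ q y) (hq1 : ∑ y, q y = 1) :
    KL q μ + KL q π =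
      2 * KL q (fun y => Real.sqrt (μ y) * Real.sqrt (π y) /
        (∑ y, Real.sqrt (μ y) * Real.sqrt (π y))) + 2 * Bhat μ π := by
  set Z := ∑ y, Real.sqrt (μ y) * Real.sqrt (π y) with hZ
  have hZ0 : 0 < Z := Zpos hμf hπf
  have key : ∀ y : 𝓨, q y * Real.log (q y / μ y) + q y * Real.log (q y / π y) =
      2 * (q y * Real.log (q y / (Real.sqrt (μ y) * Real.sqrt (π y) / Z)))
        - 2 * (q y * Real.log Z) := by
    intro y
    rcases eq_or_lt_of_le (hq y) with h | h
    · rw [← h]; ring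
    · have hm := hμf y; have hp := hπf y
      have hg0 : (0:ℝ) < Real.sqrt (μ y) * Real.sqrt (π y) / Z := g_pos hμf hπf y
      rw [Real.log_div h.ne' hm.ne', Real.log_div h.ne' hp.ne',
        Real.log_div h.ne' hg0.ne',
        Real.log_div (by positivity) hZ0.ne',
        Real.log_mul (by positivity) (by positivity),
        Real.log_sqrt hm.le, Real.log_sqrt hp.le]
      ring
  have hsum : ∑ y, (q y * Real.log (q y / μ y) + q y * Real.log (q y / π y)) =
      ∑ y, (2 * (q y * Real.log (q y / (Real.sqrt (μ y) * Real.sqrt (π y) / Z)))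
        - 2 * (q y * Real.log Z)) := Finset.sum_congr rfl fun y _ => key y
  rw [Finset.sum_add_distrib, Finset.sum_sub_distrib, ← Finset.mul_sum, ← Finset.mul_sum,
    ← Finset.sum_mul, hq1, one_mul] at hsum
  simp only [KL, Bhat, ← hZ]
  linarith [hsum]

lemma kl_add_kl_ge {𝓨 : Type} [Fintype 𝓨] [Nonempty 𝓨] {μ π : 𝓨 → ℝ}
    (hμf : ∀ y, 0 < μ y) (hπf : ∀ y, 0 < π y)
    {q : 𝓨 → ℝ} (hq : ∀ y, 0 ≤ q y) (hq1 : ∑ y, q y = 1) :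
    2 * Bhat μ π ≤ KL q μ + KL q π := by
  rw [kl_two_identity hμf hπf hq hq1]
  have h0 : 0 ≤ KL q (fun y => Real.sqrt (μ y) * Real.sqrt (π y) /
      (∑ y, Real.sqrt (μ y) * Real.sqrt (π y))) :=
    kl_nonneg hq (fun y => (g_pos hμf hπf y).le) (fun y _ => g_pos hμf hπf y)
      hq1 (le_of_eq (g_sum hμf hπf))
  linarith

lemma kl_self_eq_zero {𝓨 : Type} [Fintype 𝓨] {p : 𝓨 → ℝ} (hp : ∀ y, 0 < p y) :
    KL p p = 0 := by
  rw [KL]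
  apply Finset.sum_eq_zero
  intro y _
  rw [div_self (hp y).ne', Real.log_one, mul_zero]

lemma kl_g_eq {𝓨 : Type} [Fintype 𝓨] [Nonempty 𝓨] {μ π : 𝓨 → ℝ}
    (hμf : ∀ y, 0 < μ y) (hπf : ∀ y, 0 < π y) :
    KL (fun y => Real.sqrt (μ y) * Real.sqrt (π y) /
      (∑ y, Real.sqrt (μ y) * Real.sqrt (π y))) μ +
    KL (fun y => Real.sqrt (μ y) * Real.sqrt (π y) /
      (∑ y, Real.sqrt (μ y) * Real.sqrt (π y))) π = 2 * Bhat μ π := by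
  rw [kl_two_identity hμf hπf (fun y => (g_pos hμf hπf y).le) (g_sum hμf hπf),
    kl_self_eq_zero (g_pos hμf hπf)]
  ring

lemma kl_split_point {a m p : ℝ} (ha : 0 ≤ a) (hm : 0 < a → 0 < m) (hp : 0 < p) :
    a * Real.log (a / p) = a * Real.log (a / m) + a * Real.log (m / p) := by
  rcases eq_or_lt_of_le ha with h | h
  · rw [← h]; ring
  · have hm0 := hm h
    rw [Real.log_div h.ne' hp.ne', Real.log_div h.ne' hm0.ne',
      Real.log_div hm0.ne' hp.ne']
    ring

lemma kl_decomp {𝓨 : Type} [Fintype 𝓨] {q r p : 𝓨 → ℝ}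
    (hq : ∀ y, 0 ≤ q y) (hr : ∀ y, 0 < q y → 0 < r y) (hp : ∀ y, 0 < p y) :
    KL q p = KL q r + ∑ y, q y * Real.log (r y / p y) := by
  rw [KL, KL, ← Finset.sum_add_distrib]
  exact Finset.sum_congr rfl fun y _ => kl_split_point (hq y) (hr y) (hp y)

lemma range_sdiff_zero (M : ℕ) (hM : 2 ≤ M) :
    Finset.range M \ {0} = insert 1 (Finset.range M \ {0, 1}) := by
  ext j
  simp only [Finset.mem_sdiff, Finset.mem_range, Finset.mem_singleton,
    Finset.mem_insert, Finset.mem_insert, Finset.mem_singleton, not_or]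
  omega

lemma range_sdiff_one (M : ℕ) (hM : 2 ≤ M) :
    Finset.range M \ {1} = insert 0 (Finset.range M \ {0, 1}) := by
  ext j
  simp only [Finset.mem_sdiff, Finset.mem_range, Finset.mem_singleton,
    Finset.mem_insert, Finset.mem_insert, Finset.mem_singleton, not_or]
  omega

lemma one_not_mem_D2 (M : ℕ) : 1 ∉ Finset.range M \ ({0, 1} : Finset ℕ) := by simp

lemma zero_not_mem_D2 (M : ℕ) : 0 ∉ Finset.range M \ ({0, 1} : Finset ℕ) := by simp

/-- `2 B(μ,π)` is always feasible (for `M ≥ 2`). -/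

lemma vstar_mem {𝓨 : Type} [Fintype 𝓨] [Nonempty 𝓨] {μ π : 𝓨 → ℝ}
    (hμf : ∀ y, 0 < μ y) (hπf : ∀ y, 0 < π y) (hπ1 : ∑ y, π y = 1)
    (M : ℕ) (hM : 2 ≤ M) : 2 * Bhat μ π ∈ VstarSet μ π M := by
  set g : 𝓨 → ℝ := fun y => Real.sqrt (μ y) * Real.sqrt (π y) /
    (∑ y, Real.sqrt (μ y) * Real.sqrt (π y)) with hg
  refine ⟨fun j => if j ≤ 1 then g else π, ?_, ?_, ?_⟩
  · intro j _
    by_cases h : j ≤ 1 <;> simp only [h, if_true, if_false]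
    · exact ⟨fun y => (g_pos hμf hπf y).le, g_sum hμf hπf⟩
    · exact ⟨fun y => (hπf y).le, hπ1⟩
  · have hq1 : (fun j => if j ≤ 1 then g else π) 1 = g := by norm_num
    have hq0 : (fun j => if j ≤ 1 then g else π) 0 = g := by norm_num
    have hsumP : ∀ p : 𝓨 → ℝ,
        ∑ j ∈ Finset.range M \ {0}, KL ((fun j => if j ≤ 1 then g else π) j) p =
        ∑ j ∈ Finset.range M \ {1}, KL ((fun j => if j ≤ 1 then g else π) j) p := by
      intro p
      rw [range_sdiff_zero M hM, range_sdiff_one M hM,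
        Finset.sum_insert (one_not_mem_D2 M), Finset.sum_insert (zero_not_mem_D2 M),
        hq0, hq1]
    have hT : ∀ a, (∑ k ∈ Finset.range M \ {0}, (fun j => if j ≤ 1 then g else π) k a) =
        (∑ k ∈ Finset.range M \ {1}, (fun j => if j ≤ 1 then g else π) k a) := by
      intro a
      rw [range_sdiff_zero M hM, range_sdiff_one M hM,
        Finset.sum_insert (one_not_mem_D2 M), Finset.sum_insert (zero_not_mem_D2 M)]
      norm_num
    have := hsumP (fun a => (∑ k ∈ Finset.range M \ {0},
        (fun j => if j ≤ 1 then g else π) k a) / ((M : ℝ) - 1))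
    refine le_of_eq ?_
    have hfun : (fun a => (∑ k ∈ Finset.range M \ {1},
        (fun j => if j ≤ 1 then g else π) k a) / ((M : ℝ) - 1)) =
        (fun a => (∑ k ∈ Finset.range M \ {0},
        (fun j => if j ≤ 1 then g else π) k a) / ((M : ℝ) - 1)) := by
      funext a; rw [hT a]
    rw [hfun]
    exact (hsumP _).symm
  · have h0 : ((fun j => if j ≤ 1 then g else π) 0) = g := by norm_num
    rw [h0, range_sdiff_zero M hM, Finset.sum_insert (one_not_mem_D2 M)]
    have h1 : KL ((fun j => if j ≤ 1 then g else π) 1) π = KL g π := by norm_num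
    have h2 : ∑ j ∈ Finset.range M \ {0, 1},
        KL ((fun j => if j ≤ 1 then g else π) j) π = 0 := by
      apply Finset.sum_eq_zero
      intro j hj
      simp only [Finset.mem_sdiff, Finset.mem_range, Finset.mem_insert,
        Finset.mem_singleton, not_or] at hj
      have : ¬ j ≤ 1 := by omega
      simp only [this, if_false]
      exact kl_self_eq_zero hπf
    rw [h1, h2, add_zero, ← kl_g_eq hμf hπf]

lemma vstar_lower {𝓨 : Type} [Fintype 𝓨] [Nonempty 𝓨] {μ π : 𝓨 → ℝ}
    (hμf : ∀ y, 0 < μ y) (hπf : ∀ y, 0 < π y)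
    (hμ1 : ∑ y, μ y = 1) (hπ1 : ∑ y, π y = 1)
    {c : ℝ} (hc : 0 < c) (hcπ : ∀ y, c ≤ π y)
    (M : ℕ) (hM : 2 ≤ M) (x : ℝ) (hx : x ∈ VstarSet μ π M) :
    2 * Bhat μ π - (2 / ((M:ℝ) - 1) +
      2 * Real.sqrt (2 * Bhat μ π / ((M:ℝ) - 1))) / c ≤ x := by
  set B := Bhat μ π with hB
  set n : ℝ := (M:ℝ) - 1 with hn
  have hMR : (2:ℝ) ≤ (M:ℝ) := by exact_mod_cast hM
  have hn0 : 0 < n := by rw [hn]; linarith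
  have heps : 0 ≤ (2 / n + 2 * Real.sqrt (2 * B / n)) / c := by
    apply div_nonneg _ hc.le
    have := Real.sqrt_nonneg (2 * B / n)
    positivity
  rcases le_or_gt x (2 * B) with hx2 | hx2
  swap
  · linarith
  obtain ⟨q, hq, hcon, hxeq⟩ := hx
  have hqmem : ∀ j ∈ Finset.range M \ {0}, (∀ y, 0 ≤ q j y) ∧ ∑ y, q j y = 1 := by
    intro j hj
    simp only [Finset.mem_sdiff, Finset.mem_range] at hj
    exact hq j hj.1
  have hqmem1 : ∀ j ∈ Finset.range M \ {1}, (∀ y, 0 ≤ q j y) ∧ ∑ y, q j y = 1 := by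
    intro j hj
    simp only [Finset.mem_sdiff, Finset.mem_range] at hj
    exact hq j hj.1
  have hq0 := hq 0 (by omega)
  -- the mixtures
  set qb : 𝓨 → ℝ := fun a => (∑ k ∈ Finset.range M \ {0}, q k a) / n with hqb
  set rb : 𝓨 → ℝ := fun a => (∑ k ∈ Finset.range M \ {1}, q k a) / n with hrb
  have hcard0 : ((Finset.range M \ {0}).card : ℝ) = n := by
    rw [Finset.card_sdiff_of_subset (by simp; omega)]
    simp only [Finset.card_range, Finset.card_singleton]
    rw [hn]; push_cast [Nat.cast_sub (by omega : 1 ≤ M)]; ring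
  have hcard1 : ((Finset.range M \ {1}).card : ℝ) = n := by
    rw [Finset.card_sdiff_of_subset (by simp; omega)]
    simp only [Finset.card_range, Finset.card_singleton]
    rw [hn]; push_cast [Nat.cast_sub (by omega : 1 ≤ M)]; ring
  have hqb_nonneg : ∀ a, 0 ≤ qb a := fun a =>
    div_nonneg (Finset.sum_nonneg fun k hk => (hqmem k hk).1 a) hn0.le
  have hqb_sum : ∑ a, qb a = 1 := by
    rw [hqb]
    simp only
    rw [← Finset.sum_div, Finset.sum_comm]
    rw [Finset.sum_congr rfl fun k hk => (hqmem k hk).2]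
    rw [Finset.sum_const, nsmul_eq_mul, mul_one, hcard0, div_self hn0.ne']
  have hrb_sum : ∑ a, rb a = 1 := by
    rw [hrb]
    simp only
    rw [← Finset.sum_div, Finset.sum_comm]
    rw [Finset.sum_congr rfl fun k hk => (hqmem1 k hk).2]
    rw [Finset.sum_const, nsmul_eq_mul, mul_one, hcard1, div_self hn0.ne']
  have hqb_pos : ∀ j ∈ Finset.range M \ {0}, ∀ a, 0 < q j a → 0 < qb a := by
    intro j hj a hja
    rw [hqb]
    have hle : q j a ≤ ∑ k ∈ Finset.range M \ {0}, q k a :=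
      Finset.single_le_sum (fun k hk => (hqmem k hk).1 a) hj
    exact div_pos (lt_of_lt_of_le hja hle) hn0
  have hrb_pos : ∀ j ∈ Finset.range M \ {1}, ∀ a, 0 < q j a → 0 < rb a := by
    intro j hj a hja
    rw [hrb]
    have hle : q j a ≤ ∑ k ∈ Finset.range M \ {1}, q k a :=
      Finset.single_le_sum (fun k hk => (hqmem1 k hk).1 a) hj
    exact div_pos (lt_of_lt_of_le hja hle) hn0
  have h0mem : (0 : ℕ) ∈ Finset.range M \ {1} := by simp; omega
  set V2 : ℝ := ∑ j ∈ Finset.range M \ {0}, KL (q j) π with hV2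
  -- decomposition : V2 = L + n * KL qb π
  set L : ℝ := ∑ j ∈ Finset.range M \ {0}, KL (q j) qb with hL
  have hdecomp : V2 = L + n * KL qb π := by
    have h1 : ∑ j ∈ Finset.range M \ {0}, KL (q j) π =
        ∑ j ∈ Finset.range M \ {0},
          (KL (q j) qb + ∑ y, q j y * Real.log (qb y / π y)) :=
      Finset.sum_congr rfl fun j hj => kl_decomp (hqmem j hj).1 (hqb_pos j hj) hπf
    have h2 : ∑ j ∈ Finset.range M \ {0}, ∑ y, q j y * Real.log (qb y / π y) =
        n * KL qb π := by
      rw [Finset.sum_comm, KL, Finset.mul_sum]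
      refine Finset.sum_congr rfl fun a _ => ?_
      rw [← Finset.sum_mul]
      have h3 : (∑ j ∈ Finset.range M \ {0}, q j a) = n * qb a := by
        rw [hqb]; field_simp
      rw [h3]; ring
    rw [hV2, h1, Finset.sum_add_distrib, h2, hL]
  have hKLqbπ : 0 ≤ KL qb π :=
    kl_nonneg hqb_nonneg (fun y => (hπf y).le) (fun y _ => hπf y) hqb_sum hπ1.le
  have hL_nonneg : 0 ≤ L := by
    rw [hL]
    apply Finset.sum_nonneg
    intro j hj
    exact kl_nonneg (hqmem j hj).1 hqb_nonneg (hqb_pos j hj) (hqmem j hj).2 hqb_sum.le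
  -- constraint gives : KL (q 0) rb ≤ L
  have hconL : KL (q 0) rb ≤ L := by
    have hRHS : KL (q 0) rb ≤
        ∑ j ∈ Finset.range M \ {1}, KL (q j) rb := by
      apply Finset.single_le_sum (f := fun j => KL (q j) rb) _ h0mem
      intro j hj
      exact kl_nonneg (hqmem1 j hj).1
        (fun a => div_nonneg (Finset.sum_nonneg fun k hk => (hqmem1 k hk).1 a) hn0.le)
        (hrb_pos j hj) (hqmem1 j hj).2 hrb_sum.le
    exact le_trans hRHS hcon
  -- objective pieces
  have hKLq0μ : 0 ≤ KL (q 0) μ :=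
    kl_nonneg hq0.1 (fun y => (hμf y).le) (fun y _ => hμf y) hq0.2 hμ1.le
  have hV2x : V2 ≤ x := by rw [hxeq]; linarith
  have hV2_nonneg : 0 ≤ V2 := by
    rw [hV2]
    apply Finset.sum_nonneg
    intro j hj
    exact kl_nonneg (hqmem j hj).1 (fun y => (hπf y).le) (fun y _ => hπf y)
      (hqmem j hj).2 hπ1.le
  -- bound KL qb π ≤ 2B/n
  have hKLqb_le : KL qb π ≤ 2 * B / n := by
    have h1 : n * KL qb π ≤ V2 := by rw [hdecomp]; linarith
    rw [le_div_iff₀ hn0]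
    nlinarith
  -- E := error term
  have hE_decomp : KL (q 0) π = KL (q 0) rb + ∑ y, q 0 y * Real.log (rb y / π y) :=
    kl_decomp hq0.1 (hrb_pos 0 h0mem) hπf
  -- pointwise bound on E
  have hq0le1 : ∀ y, q 0 y ≤ 1 := by
    intro y
    rw [← hq0.2]
    exact Finset.single_le_sum (fun z _ => hq0.1 z) (Finset.mem_univ y)
  have hE_le : ∑ y, q 0 y * Real.log (rb y / π y) ≤ (∑ y, |rb y - π y|) / c := by
    rw [Finset.sum_div]
    apply Finset.sum_le_sum
    intro y _
    have habs : 0 ≤ |rb y - π y| / c := by positivity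
    rcases eq_or_lt_of_le (hq0.1 y) with h | h
    · rw [← h, zero_mul]; exact habs
    · have hrby : 0 < rb y := hrb_pos 0 h0mem y h
      have hlog : Real.log (rb y / π y) ≤ |rb y - π y| / c := by
        have h1 : Real.log (rb y / π y) ≤ rb y / π y - 1 :=
          Real.log_le_sub_one_of_pos (div_pos hrby (hπf y))
        have h2 : rb y / π y - 1 = (rb y - π y) / π y := by
          rw [sub_div, div_self (hπf y).ne']
        have h3 : (rb y - π y) / π y ≤ |rb y - π y| / c := by
          apply div_le_div₀ (abs_nonneg _) (le_abs_self _) hc (hcπ y)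
        linarith
      rcases le_or_gt (Real.log (rb y / π y)) 0 with hneg | hpos
      · have : q 0 y * Real.log (rb y / π y) ≤ 0 :=
          mul_nonpos_of_nonneg_of_nonpos h.le hneg
        linarith
      · calc q 0 y * Real.log (rb y / π y) ≤ 1 * Real.log (rb y / π y) := by
              apply mul_le_mul_of_nonneg_right (hq0le1 y) hpos.le
          _ = Real.log (rb y / π y) := one_mul _
          _ ≤ |rb y - π y| / c := hlog
  -- ℓ¹ bounds
  have hrq_diff : ∀ y, rb y - qb y = (q 0 y - q 1 y) / n := by
    intro y
    rw [hrb, hqb]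
    rw [div_sub_div_same]
    congr 1
    rw [range_sdiff_zero M hM, range_sdiff_one M hM,
      Finset.sum_insert (one_not_mem_D2 M), Finset.sum_insert (zero_not_mem_D2 M)]
    ring
  have hq1mem := hq 1 (by omega)
  have hl1_rq : ∑ y, |rb y - qb y| ≤ 2 / n := by
    have : ∀ y, |rb y - qb y| ≤ (q 0 y + q 1 y) / n := by
      intro y
      rw [hrq_diff y, abs_div, abs_of_pos hn0]
      exact (div_le_div_iff_of_pos_right hn0).mpr (le_trans (abs_sub (q 0 y) (q 1 y))
          (by rw [abs_of_nonneg (hq0.1 y), abs_of_nonneg (hq1mem.1 y)]))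
    calc ∑ y, |rb y - qb y| ≤ ∑ y, (q 0 y + q 1 y) / n :=
          Finset.sum_le_sum fun y _ => this y
      _ = 2 / n := by
          rw [← Finset.sum_div, Finset.sum_add_distrib, hq0.2, hq1mem.2]
          norm_num
  have hl1_qπ : ∑ y, |qb y - π y| ≤ 2 * Real.sqrt (2 * B / n) := by
    have h1 := l1_le_two_sqrt_kl hqb_nonneg hπf hqb_sum hπ1
    have h2 : Real.sqrt (KL qb π) ≤ Real.sqrt (2 * B / n) :=
      Real.sqrt_le_sqrt hKLqb_le
    linarith
  have hl1_rπ : ∑ y, |rb y - π y| ≤ 2 / n + 2 * Real.sqrt (2 * B / n) := by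
    have h1 : ∀ y, |rb y - π y| ≤ |rb y - qb y| + |qb y - π y| := by
      intro y
      have := abs_sub_le (rb y) (qb y) (π y)
      linarith
    calc ∑ y, |rb y - π y| ≤ ∑ y, (|rb y - qb y| + |qb y - π y|) :=
          Finset.sum_le_sum fun y _ => h1 y
      _ = (∑ y, |rb y - qb y|) + ∑ y, |qb y - π y| := Finset.sum_add_distrib
      _ ≤ 2 / n + 2 * Real.sqrt (2 * B / n) := by linarith
  -- put everything together
  have hE_final : ∑ y, q 0 y * Real.log (rb y / π y) ≤
      (2 / n + 2 * Real.sqrt (2 * B / n)) / c := by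
    exact le_trans hE_le ((div_le_div_iff_of_pos_right hc).mpr hl1_rπ)
  have h2B : 2 * B ≤ KL (q 0) μ + KL (q 0) π := kl_add_kl_ge hμf hπf hq0.1 hq0.2
  rw [hxeq]
  have hfinal : KL (q 0) rb ≤ V2 :=
    le_trans hconL (by nlinarith [hdecomp, hKLqbπ, hn0])
  linarith [hE_decomp, hE_final, hfinal, h2B]

/-- asymptotic efficiency in Theorem 3.
`lim_{M → ∞} V*(M) = 2·B(μ,π)`, where `V*(M)` is the value of the optimization
problem in Theorem 2. -/
theorem statement12 (𝓨 : Type) [Fintype 𝓨] [Nonempty 𝓨]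
    (μ π : 𝓨 → ℝ) (hμ : IsProb μ) (hπ : IsProb π)
    (hμf : FullSupport μ) (hπf : FullSupport π) (hne : μ ≠ π) :
    Tendsto (fun M : ℕ => sInf (VstarSet μ π M)) atTop (𝓝 (2 * Bhat μ π)) := by

  clear hne
  obtain ⟨hμ0, hμ1⟩ := hμ
  obtain ⟨hπ0, hπ1⟩ := hπ
  set B := Bhat μ π with hB
  set c : ℝ := Finset.univ.inf' Finset.univ_nonempty π with hc
  have hc0 : 0 < c := by
    rw [hc, Finset.lt_inf'_iff]
    exact fun y _ => hπf y
  have hcle : ∀ y, c ≤ π y := fun y => Finset.inf'_le _ (Finset.mem_univ y)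
  set eps : ℕ → ℝ := fun M => (2 / ((M:ℝ) - 1) +
    2 * Real.sqrt (2 * B / ((M:ℝ) - 1))) / c with heps
  have hlow : ∀ M : ℕ, 2 ≤ M → 2 * B - eps M ≤ sInf (VstarSet μ π M) := by
    intro M hM
    apply le_csInf ⟨2 * B, vstar_mem hμf hπf hπ1 M hM⟩
    intro x hx
    exact vstar_lower hμf hπf hμ1 hπ1 hc0 hcle M hM x hx
  have hup : ∀ M : ℕ, 2 ≤ M → sInf (VstarSet μ π M) ≤ 2 * B := by
    intro M hM
    exact csInf_le ⟨2 * B - eps M,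
      fun x hx => vstar_lower hμf hπf hμ1 hπ1 hc0 hcle M hM x hx⟩
      (vstar_mem hμf hπf hπ1 M hM)
  have hinv : Tendsto (fun M : ℕ => ((M:ℝ) - 1)⁻¹) atTop (𝓝 0) := by
    apply Filter.Tendsto.inv_tendsto_atTop
    have : Tendsto (fun M : ℕ => (M:ℝ)) atTop atTop := tendsto_natCast_atTop_atTop
    exact Filter.tendsto_atTop_add_const_right atTop (-1) this |>.congr (by intro x; ring_nf)
  have heps0 : Tendsto eps atTop (𝓝 0) := by
    have h1 : Tendsto (fun M : ℕ => 2 / ((M:ℝ) - 1)) atTop (𝓝 0) := by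
      simpa [div_eq_mul_inv] using hinv.const_mul 2
    have h2 : Tendsto (fun M : ℕ => 2 * B / ((M:ℝ) - 1)) atTop (𝓝 0) := by
      simpa [div_eq_mul_inv] using hinv.const_mul (2 * B)
    have h3 : Tendsto (fun M : ℕ => Real.sqrt (2 * B / ((M:ℝ) - 1))) atTop (𝓝 0) := by
      have := (Real.continuous_sqrt.tendsto 0).comp h2
      simpa [Function.comp_def] using this
    have h4 : Tendsto (fun M : ℕ => (2 / ((M:ℝ) - 1) +
        2 * Real.sqrt (2 * B / ((M:ℝ) - 1))) / c) atTop (𝓝 ((0 + 2 * 0) / c)) :=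
      (h1.add (h3.const_mul 2)).div_const c
    rw [heps]
    simpa using h4
  have hlowT : Tendsto (fun M : ℕ => 2 * B - eps M) atTop (𝓝 (2 * B)) := by
    have h := Filter.Tendsto.sub (tendsto_const_nhds (x := 2 * B) (f := (atTop : Filter ℕ))) heps0
    simpa using h
  apply tendsto_of_tendsto_of_tendsto_of_le_of_le' hlowT tendsto_const_nhds
  · filter_upwards [eventually_ge_atTop 2] with M hM using hlow M hM
  · filter_upwards [eventually_ge_atTop 2] with M hM using hup M hM
end
end

section
/- (Proposition 4.) Suppose |𝒴| ≥ 2. Fix M ≥ 3 and a full-support probability distribution π on 𝒴. There does not exist a sequence of tests δ_n : (𝒴^M)^n → {0, 1, …, M} (which may depend on π) such that for every full-support probability distribution μ ≠ π on 𝒴, liminf_{n→∞} −(1/n) log max_{i ∈ {0,1,…,M}} P_i{ y : δ_n(y) ≠ i } > 0. That is, when the null hypothesis with no outlier is included, there cannot exist a universally exponentially consistent test even when the typical distribution is known. -/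
open Filter Finset Topology

noncomputable section

/-- Probability of an event under a pmf on a finite sample space. -/
def probOf {α : Type} [Fintype α] (P : α → ℝ) (A : Set α) : ℝ :=
  ∑ y, A.indicator P y

/-- Joint pmf in the at-most-one-outlier model: hypothesis `i : Fin (M+1)`,
where `i = 0` is the null hypothesis (no outlier) and `i = j+1` means
coordinate `j` is the outlier. -/
def pAtMost {𝓨 : Type} [Fintype 𝓨] {M n : ℕ} (μ π : 𝓨 → ℝ) (i : Fin (M+1))
    (y : Fin n → Fin M → 𝓨) : ℝ :=
  ∏ k, ∏ j : Fin M, (if (j : ℕ) + 1 = (i : ℕ) then μ else π) (y k j)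

set_option linter.unusedSectionVars false

section Helpers

variable {𝓨 : Type} [Fintype 𝓨] {M n : ℕ}

private lemma sum_pi_prod {ι α : Type} [Fintype ι] [DecidableEq ι] [Fintype α]
    (F : ι → α → ℝ) :
    ∑ y : ι → α, ∏ i, F i (y i) = ∏ i, ∑ a, F i a := by
  rw [Finset.prod_univ_sum (fun _ => (univ : Finset α)) F]
  rw [Fintype.piFinset_univ]

private lemma sum_prod_coord (q : Fin M → 𝓨 → ℝ)
    (hq : ∀ j, ∑ s, q j s = 1) (j₀ : Fin M) (h : 𝓨 → ℝ) :
    ∑ v : Fin M → 𝓨, (∏ j, q j (v j)) * h (v j₀) = ∑ s, q j₀ s * h s := by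
  classical
  have key : ∀ v : Fin M → 𝓨, (∏ j, q j (v j)) * h (v j₀)
      = ∏ j, (q j (v j) * if j = j₀ then h (v j) else 1) := by
    intro v
    rw [Finset.prod_mul_distrib, Finset.prod_ite_eq' Finset.univ j₀ (fun j => h (v j))]
    simp
  simp_rw [key]
  rw [sum_pi_prod (fun (j : Fin M) (a : 𝓨) => q j a * if j = j₀ then h a else 1)]
  rw [Finset.prod_eq_single j₀]
  · simp
  · intro j _ hj
    simp only [if_neg hj, mul_one]
    exact hq j
  · intro hmem; exact absurd (Finset.mem_univ j₀) hmem

private lemma pAtMost_sum_one (μ π : 𝓨 → ℝ)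
    (hμ : ∑ s, μ s = 1) (hπ : ∑ s, π s = 1) (i : Fin (M+1)) :
    ∑ y : Fin n → Fin M → 𝓨, pAtMost μ π i y = 1 := by
  classical
  unfold pAtMost
  rw [sum_pi_prod (fun (_ : Fin n) (v : Fin M → 𝓨) =>
    ∏ j : Fin M, (if (j : ℕ) + 1 = (i : ℕ) then μ else π) (v j))]
  have key : ∀ k : Fin n, (∑ v : Fin M → 𝓨,
      ∏ j : Fin M, (if (j : ℕ) + 1 = (i : ℕ) then μ else π) (v j)) = 1 := by
    intro k
    rw [sum_pi_prod (fun (j : Fin M) (s : 𝓨) => (if (j : ℕ) + 1 = (i : ℕ) then μ else π) s)]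
    apply Finset.prod_eq_one
    intro j _
    split <;> assumption
  rw [Finset.prod_congr rfl (fun k _ => key k)]
  simp

private lemma pAtMost_nonneg (μ π : 𝓨 → ℝ) (hμ : ∀ s, 0 ≤ μ s) (hπ : ∀ s, 0 ≤ π s)
    (i : Fin (M+1)) (y : Fin n → Fin M → 𝓨) : 0 ≤ pAtMost μ π i y := by
  unfold pAtMost
  apply Finset.prod_nonneg
  intro k _
  apply Finset.prod_nonneg
  intro j _
  split <;> solve_by_elim

private lemma qone (μ π : 𝓨 → ℝ) (hM : 1 ≤ M) (j₀ : Fin M) (hj₀ : (j₀ : ℕ) = 0) (j : Fin M) :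
    (if (j : ℕ) + 1 = ((1 : Fin (M+1)) : ℕ) then μ else π) = if j = j₀ then μ else π := by
  have h1 : ((1 : Fin (M+1)) : ℕ) = 1 := by
    have : 1 < M + 1 := by omega
    simp [Fin.val_one', Nat.mod_eq_of_lt this]
  rw [h1]
  by_cases hj : j = j₀
  · subst hj; rw [if_pos (by omega), if_pos rfl]
  · have : (j : ℕ) ≠ 0 := by
      intro h0; exact hj (Fin.ext (by omega))
    rw [if_neg (by omega), if_neg hj]

/-- master expectation lemma under hypothesis 1 -/
private lemma master (μ π : 𝓨 → ℝ) (hμ : ∑ s, μ s = 1) (hπ : ∑ s, π s = 1)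
    (hM : 1 ≤ M) (j₀ : Fin M) (hj₀ : (j₀ : ℕ) = 0) (h : Fin n → 𝓨 → ℝ) :
    ∑ y : Fin n → Fin M → 𝓨, pAtMost μ π 1 y * ∏ k, h k (y k j₀)
      = ∏ k, ∑ s, μ s * h k s := by
  classical
  unfold pAtMost
  have key : ∀ y : Fin n → Fin M → 𝓨,
      (∏ k, ∏ j : Fin M, (if (j : ℕ) + 1 = ((1 : Fin (M+1)) : ℕ) then μ else π) (y k j))
        * ∏ k, h k (y k j₀)
      = ∏ k, ((∏ j, (fun j' => if j' = j₀ then μ else π) j (y k j)) * h k (y k j₀)) := by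
    intro y
    rw [← Finset.prod_mul_distrib]
    apply Finset.prod_congr rfl
    intro k _
    congr 1
    exact Finset.prod_congr rfl (fun j _ => by rw [qone μ π hM j₀ hj₀ j])
  simp_rw [key]
  rw [sum_pi_prod (fun (k : Fin n) (v : Fin M → 𝓨) =>
    (∏ j, (fun j' => if j' = j₀ then μ else π) j (v j)) * h k (v j₀))]
  apply Finset.prod_congr rfl
  intro k _
  rw [sum_prod_coord (fun j' => if j' = j₀ then μ else π)
    (fun j => by by_cases hj : j = j₀ <;> simp [hj, hμ, hπ]) j₀ (h k)]
  simp

private lemma expect_pair (μ π : 𝓨 → ℝ) (hμ : ∑ s, μ s = 1) (hπ : ∑ s, π s = 1)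
    (hM : 1 ≤ M) (j₀ : Fin M) (hj₀ : (j₀ : ℕ) = 0) (g : 𝓨 → ℝ)
    (hg : ∑ s, μ s * g s = 0) (k k' : Fin n) :
    ∑ y : Fin n → Fin M → 𝓨, pAtMost μ π 1 y * (g (y k j₀) * g (y k' j₀))
      = if k = k' then ∑ s, μ s * g s ^ 2 else 0 := by
  classical
  have hprod : ∀ y : Fin n → Fin M → 𝓨, g (y k j₀) * g (y k' j₀)
      = ∏ k'' : Fin n, ((if k'' = k then g (y k'' j₀) else 1)
          * (if k'' = k' then g (y k'' j₀) else 1)) := by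
    intro y
    rw [Finset.prod_mul_distrib, Finset.prod_ite_eq' Finset.univ k (fun k'' => g (y k'' j₀)),
      Finset.prod_ite_eq' Finset.univ k' (fun k'' => g (y k'' j₀))]
    simp
  simp_rw [hprod]
  rw [master μ π hμ hπ hM j₀ hj₀
    (fun k'' s => (if k'' = k then g s else 1) * (if k'' = k' then g s else 1))]
  by_cases hkk : k = k'
  · subst hkk
    rw [if_pos rfl, Finset.prod_eq_single k]
    · simp [sq]
    · intro k'' _ hne; simp [if_neg hne, hπ, hμ]
    · intro hmem; exact absurd (Finset.mem_univ k) hmem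
  · rw [if_neg hkk]
    apply Finset.prod_eq_zero (Finset.mem_univ k)
    simp only [if_pos rfl, if_neg hkk, mul_one]
    exact hg

private lemma second_moment (μ π : 𝓨 → ℝ) (hμ : ∑ s, μ s = 1) (hπ : ∑ s, π s = 1)
    (hM : 1 ≤ M) (j₀ : Fin M) (hj₀ : (j₀ : ℕ) = 0) (g : 𝓨 → ℝ)
    (hg : ∑ s, μ s * g s = 0) :
    ∑ y : Fin n → Fin M → 𝓨, pAtMost μ π 1 y * (∑ k, g (y k j₀)) ^ 2
      = n * ∑ s, μ s * g s ^ 2 := by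
  classical
  have expand : ∀ y : Fin n → Fin M → 𝓨,
      pAtMost μ π 1 y * (∑ k, g (y k j₀)) ^ 2
      = ∑ k : Fin n, ∑ k' : Fin n, pAtMost μ π 1 y * (g (y k j₀) * g (y k' j₀)) := by
    intro y
    rw [sq, Finset.sum_mul_sum]
    rw [Finset.mul_sum]
    apply Finset.sum_congr rfl
    intro k _
    rw [Finset.mul_sum]
  simp_rw [expand]
  rw [Finset.sum_comm]
  have swap2 : ∀ k : Fin n, ∑ y : Fin n → Fin M → 𝓨, ∑ k' : Fin n,
      pAtMost μ π 1 y * (g (y k j₀) * g (y k' j₀))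
      = ∑ k' : Fin n, ∑ y : Fin n → Fin M → 𝓨,
      pAtMost μ π 1 y * (g (y k j₀) * g (y k' j₀)) := fun k => Finset.sum_comm
  rw [Finset.sum_congr rfl (fun k _ => swap2 k)]
  have inner : ∀ k : Fin n, (∑ k' : Fin n, ∑ y : Fin n → Fin M → 𝓨,
      pAtMost μ π 1 y * (g (y k j₀) * g (y k' j₀))) = ∑ s, μ s * g s ^ 2 := by
    intro k
    rw [Finset.sum_congr rfl
      (fun k' _ => expect_pair μ π hμ hπ hM j₀ hj₀ g hg k k')]
    simp
  rw [Finset.sum_congr rfl (fun k _ => inner k)]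
  simp [Finset.card_univ, mul_comm]

private lemma pAtMost_zero (μ μ' π : 𝓨 → ℝ) (y : Fin n → Fin M → 𝓨) :
    pAtMost μ π 0 y = pAtMost μ' π 0 y := by
  unfold pAtMost
  apply Finset.prod_congr rfl
  intro k _
  apply Finset.prod_congr rfl
  intro j _
  rw [if_neg (by simp), if_neg (by simp)]

private lemma pAtMost_ratio (μ π : 𝓨 → ℝ) (hμf : ∀ s, 0 < μ s) (hπf : ∀ s, 0 < π s)
    (hM : 1 ≤ M) (j₀ : Fin M) (hj₀ : (j₀ : ℕ) = 0) (y : Fin n → Fin M → 𝓨) :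
    pAtMost μ π 1 y * Real.exp (∑ k, Real.log (π (y k j₀) / μ (y k j₀)))
      = pAtMost μ π 0 y := by
  classical
  rw [Real.exp_sum]
  have hexp : ∀ k : Fin n, Real.exp (Real.log (π (y k j₀) / μ (y k j₀)))
      = π (y k j₀) / μ (y k j₀) := fun k =>
    Real.exp_log (div_pos (hπf _) (hμf _))
  rw [Finset.prod_congr rfl (fun k _ => hexp k)]
  unfold pAtMost
  rw [← Finset.prod_mul_distrib]
  apply Finset.prod_congr rfl
  intro k _
  have h1 : (∏ j : Fin M, (if (j:ℕ) + 1 = ((1 : Fin (M+1)):ℕ) then μ else π) (y k j))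
      = μ (y k j₀) * ∏ j ∈ Finset.univ.erase j₀, π (y k j) := by
    rw [Finset.prod_congr rfl (fun j _ => by rw [qone μ π hM j₀ hj₀ j])]
    rw [← Finset.mul_prod_erase Finset.univ
      (fun j => (if j = j₀ then μ else π) (y k j)) (Finset.mem_univ j₀)]
    rw [if_pos rfl]
    congr 1
    exact Finset.prod_congr rfl (fun j hj => by rw [if_neg (Finset.ne_of_mem_erase hj)])
  have h0 : (∏ j : Fin M, (if (j:ℕ) + 1 = ((0 : Fin (M+1)):ℕ) then μ else π) (y k j))
      = π (y k j₀) * ∏ j ∈ Finset.univ.erase j₀, π (y k j) := by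
    rw [Finset.prod_congr rfl (fun j (_ : j ∈ Finset.univ) => by
      rw [if_neg (by simp : ¬ ((j:ℕ) + 1 = ((0 : Fin (M+1)):ℕ)))])]
    exact (Finset.mul_prod_erase Finset.univ (fun j => π (y k j)) (Finset.mem_univ j₀)).symm
  rw [h1, h0]
  have hμ0 : μ (y k j₀) ≠ 0 := ne_of_gt (hμf _)
  field_simp

private lemma probOf_nonneg {α : Type} [Fintype α] {P : α → ℝ} (hP : ∀ y, 0 ≤ P y)
    (A : Set α) : 0 ≤ probOf P A :=
  Finset.sum_nonneg fun y _ => Set.indicator_nonneg (fun y _ => hP y) y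

private lemma probOf_le_one {α : Type} [Fintype α] {P : α → ℝ} (hP : ∀ y, 0 ≤ P y)
    (hP1 : ∑ y, P y = 1) (A : Set α) : probOf P A ≤ 1 := by
  rw [← hP1]
  apply Finset.sum_le_sum
  intro y _
  exact Set.indicator_apply_le' (fun _ => le_refl _) (fun _ => hP y)

end Helpers

set_option maxHeartbeats 1000000 in
/-- Proposition 4.  In the at-most-one-outlier model with a
known typical distribution `π`, there is no sequence of tests that is
universally exponentially consistent: no `δ` achieves a strictly positive
exponent of the maximal error probability simultaneously for every full-support
outlier distribution `μ ≠ π`. -/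
theorem statement13 (𝓨 : Type) [Fintype 𝓨] (hcard : 2 ≤ Fintype.card 𝓨)
    (M : ℕ) (hM : 3 ≤ M)
    (π : 𝓨 → ℝ) (hπ : IsProb π) (hπf : FullSupport π) :
    ¬ ∃ δ : (n : ℕ) → (Fin n → Fin M → 𝓨) → Fin (M + 1),
      ∀ μ : 𝓨 → ℝ, IsProb μ → FullSupport μ → μ ≠ π →
        0 < Filter.liminf (fun n : ℕ =>
            -(1 / (n : ℝ)) * Real.log
              (⨆ i : Fin (M + 1), probOf (pAtMost μ π i) {y | δ n y ≠ i}))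
          atTop := by
  classical
  rintro ⟨δ, hδ⟩
  obtain ⟨hπ0, hπ1⟩ := hπ
  obtain ⟨a, b, hab⟩ := Fintype.exists_pair_of_one_lt_card (by omega : 1 < Fintype.card 𝓨)
  have hMpos : 0 < M := by omega
  have hM1 : 1 ≤ M := by omega
  set j₀ : Fin M := ⟨0, hMpos⟩ with hj₀def
  have hj₀ : (j₀ : ℕ) = 0 := rfl
  -- the family of perturbed distributions
  set mu : ℝ → 𝓨 → ℝ :=
    fun t s => π s + (if s = a then t else 0) - (if s = b then t else 0) with hmudef
  have hmusum : ∀ t : ℝ, ∑ s, mu t s = 1 := by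
    intro t
    simp only [hmudef]
    rw [Finset.sum_sub_distrib, Finset.sum_add_distrib,
      Finset.sum_ite_eq' Finset.univ a (fun _ => t),
      Finset.sum_ite_eq' Finset.univ b (fun _ => t)]
    simp [hπ1]
  have hmufull : ∀ t : ℝ, 0 < t → t < π b → FullSupport (mu t) := by
    intro t ht htb s
    simp only [hmudef]
    by_cases hsa : s = a
    · subst hsa
      rw [if_pos rfl, if_neg hab]
      have := hπf s; linarith
    · by_cases hsb : s = b
      · subst hsb
        rw [if_neg (Ne.symm hab), if_pos rfl]
        linarith
      · rw [if_neg hsa, if_neg hsb]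
        have := hπf s; linarith
  have hmuprob : ∀ t : ℝ, 0 < t → t < π b → IsProb (mu t) :=
    fun t ht htb => ⟨fun s => le_of_lt (hmufull t ht htb s), hmusum t⟩
  have hmune : ∀ t : ℝ, 0 < t → mu t ≠ π := by
    intro t ht h
    have := congrFun h a
    simp only [hmudef, if_pos rfl, if_neg hab] at this
    simp [hab] at this
    linarith
  -- nonnegativity of the exponent sequences
  have hnonneg : ∀ (μ : 𝓨 → ℝ), IsProb μ → ∀ n : ℕ,
      0 ≤ -(1 / (n : ℝ)) * Real.log
        (⨆ i : Fin (M + 1), probOf (pAtMost μ π i) {y | δ n y ≠ i}) := by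
    intro μ hμp n
    set S := ⨆ i : Fin (M + 1), probOf (pAtMost (M := M) (n := n) μ π i) {y | δ n y ≠ i}
      with hSdef
    have hub : ∀ i : Fin (M+1), probOf (pAtMost (M := M) (n := n) μ π i) {y | δ n y ≠ i} ≤ 1 :=
      fun i => probOf_le_one (pAtMost_nonneg μ π hμp.1 hπ0 i)
        (pAtMost_sum_one μ π hμp.2 hπ1 i) _
    have hS1 : S ≤ 1 := ciSup_le hub
    have hS0 : 0 ≤ S := le_trans
      (probOf_nonneg (pAtMost_nonneg μ π hμp.1 hπ0 0) {y | δ n y ≠ 0})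
      (le_ciSup (f := fun i : Fin (M+1) =>
        probOf (pAtMost (M := M) (n := n) μ π i) {y | δ n y ≠ i})
        (Set.Finite.bddAbove (Set.finite_range _)) 0)
    have hlog : Real.log S ≤ 0 := Real.log_nonpos hS0 hS1
    have heq : -(1 / (n : ℝ)) * Real.log S = (1 / (n : ℝ)) * (-Real.log S) := by ring
    rw [heq]
    exact mul_nonneg (one_div_nonneg.mpr (Nat.cast_nonneg n)) (by linarith)
  have hbdd : ∀ (μ : 𝓨 → ℝ), IsProb μ → Filter.IsBoundedUnder (· ≥ ·) Filter.atTop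
      (fun n : ℕ => -(1 / (n : ℝ)) * Real.log
        (⨆ i : Fin (M + 1), probOf (pAtMost μ π i) {y | δ n y ≠ i})) :=
    fun μ hμp => Filter.isBoundedUnder_of ⟨0, fun n => hnonneg μ hμp n⟩
  -- reference distribution and its exponent
  set t₀ : ℝ := π b / 2 with ht₀def
  have ht₀ : 0 < t₀ := half_pos (hπf b)
  have ht₀b : t₀ < π b := half_lt_self (hπf b)
  have hδ₀ := hδ (mu t₀) (hmuprob t₀ ht₀ ht₀b) (hmufull t₀ ht₀ ht₀b) (hmune t₀ ht₀)
  set E : ℝ := (Filter.liminf (fun n : ℕ =>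
      -(1 / (n : ℝ)) * Real.log
        (⨆ i : Fin (M + 1), probOf (pAtMost (mu t₀) π i) {y | δ n y ≠ i}))
      Filter.atTop) / 2 with hEdef
  have hE : 0 < E := by rw [hEdef]; exact half_pos hδ₀
  have hev1 : ∀ᶠ n : ℕ in Filter.atTop, E < -(1 / (n : ℝ)) * Real.log
      (⨆ i : Fin (M + 1), probOf (pAtMost (mu t₀) π i) {y | δ n y ≠ i}) :=
    Filter.eventually_lt_of_lt_liminf (by rw [hEdef]; linarith [hδ₀])
      (hbdd (mu t₀) (hmuprob t₀ ht₀ ht₀b))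
  -- the distribution ν close to π
  set C : ℝ := max (1 / π a) (2 / π b) with hCdef
  have hC : 0 < C := lt_max_of_lt_left (one_div_pos.mpr (hπf a))
  set t : ℝ := min (π b / 2) (E / (8 * C)) with htdef
  have ht : 0 < t := lt_min ht₀ (div_pos hE (by linarith))
  have htb2 : t ≤ π b / 2 := min_le_left _ _
  have htb : t < π b := lt_of_le_of_lt htb2 ht₀b
  have htC : t * C ≤ E / 8 := by
    calc t * C ≤ (E / (8 * C)) * C :=
          mul_le_mul_of_nonneg_right (min_le_right _ _) hC.le
      _ = E / 8 := by
          field_simp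
  set ν : 𝓨 → ℝ := mu t with hνdef
  have hνprob : IsProb ν := hmuprob t ht htb
  have hνfull : FullSupport ν := hmufull t ht htb
  have hνsum : ∑ s, ν s = 1 := hνprob.2
  have hνa : ν a = π a + t := by
    simp only [hνdef, hmudef]
    simp [hab]
  have hνb : ν b = π b - t := by
    simp only [hνdef, hmudef]
    simp [Ne.symm hab]
  have hνo : ∀ s, s ≠ a → s ≠ b → ν s = π s := by
    intro s hsa hsb
    simp only [hνdef, hmudef]
    simp [hsa, hsb]
  -- the log-likelihood ratio and its moments
  set f : 𝓨 → ℝ := fun s => Real.log (π s / ν s) with hfdef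
  have hfB : ∀ s, |f s| ≤ E / 8 := by
    intro s
    by_cases hsa : s = a
    · subst hsa
      have hpa := hπf s
      rw [hfdef]
      simp only [hνa]
      have h1 : π s / (π s + t) ≤ 1 := by
        rw [div_le_one (by linarith)]; linarith
      have h2 : (0:ℝ) < π s / (π s + t) := by positivity
      rw [abs_of_nonpos (Real.log_nonpos h2.le h1)]
      have h3 : -Real.log (π s / (π s + t)) = Real.log ((π s + t) / π s) := by
        rw [← Real.log_inv, inv_div]
      rw [h3]
      have h4 := Real.log_le_sub_one_of_pos (show (0:ℝ) < (π s + t) / π s by positivity)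
      have h5 : (π s + t) / π s - 1 = t / π s := by field_simp; ring
      have h6 : t / π s ≤ t * C := by
        rw [div_eq_mul_inv, ← one_div]
        exact mul_le_mul_of_nonneg_left (le_max_left _ _) ht.le
      calc Real.log ((π s + t) / π s) ≤ t / π s := by linarith
        _ ≤ t * C := h6
        _ ≤ E / 8 := htC
    · by_cases hsb : s = b
      · subst hsb
        have hpb := hπf s
        rw [hfdef]
        simp only [hνb]
        have hbt : (0:ℝ) < π s - t := by linarith
        have h1 : (1:ℝ) ≤ π s / (π s - t) := by
          rw [le_div_iff₀ hbt]; linarith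
        rw [abs_of_nonneg (Real.log_nonneg h1)]
        have h4 := Real.log_le_sub_one_of_pos (show (0:ℝ) < π s / (π s - t) by positivity)
        have h5 : π s / (π s - t) - 1 = t / (π s - t) := by field_simp; ring
        have h6 : t / (π s - t) ≤ t / (π s / 2) :=
          div_le_div_of_nonneg_left ht.le (by linarith) (by linarith)
        have h7 : t / (π s / 2) = t * (2 / π s) := by rw [div_div_eq_mul_div, mul_div_assoc]
        have h8 : t * (2 / π s) ≤ t * C :=
          mul_le_mul_of_nonneg_left (le_max_right _ _) ht.le
        calc Real.log (π s / (π s - t)) ≤ t / (π s - t) := by linarith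
          _ ≤ t * (2 / π s) := by rw [← h7]; exact h6
          _ ≤ t * C := h8
          _ ≤ E / 8 := htC
      · rw [hfdef]
        simp only [hνo s hsa hsb]
        rw [div_self (ne_of_gt (hπf s)), Real.log_one]
        rw [abs_zero]
        linarith
  set m : ℝ := ∑ s, ν s * f s with hmdef
  have hmB : |m| ≤ E / 8 := by
    rw [hmdef]
    calc |∑ s, ν s * f s| ≤ ∑ s, |ν s * f s| := Finset.abs_sum_le_sum_abs _ _
      _ = ∑ s, ν s * |f s| := by
          apply Finset.sum_congr rfl
          intro s _
          rw [abs_mul, abs_of_nonneg (hνfull s).le]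
      _ ≤ ∑ s, ν s * (E / 8) := by
          apply Finset.sum_le_sum
          intro s _
          exact mul_le_mul_of_nonneg_left (hfB s) (hνfull s).le
      _ = E / 8 := by rw [← Finset.sum_mul, hνsum, one_mul]
  set g : 𝓨 → ℝ := fun s => f s - m with hgdef
  have hg0 : ∑ s, ν s * g s = 0 := by
    simp only [hgdef, mul_sub]
    rw [Finset.sum_sub_distrib, ← Finset.sum_mul, hνsum, one_mul, ← hmdef, sub_self]
  have hgB : ∀ s, |g s| ≤ E / 4 := by
    intro s
    simp only [hgdef]
    calc |f s - m| ≤ |f s| + |m| := abs_sub _ _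
      _ ≤ E / 8 + E / 8 := add_le_add (hfB s) hmB
      _ = E / 4 := by ring
  have hVg : ∑ s, ν s * g s ^ 2 ≤ E ^ 2 / 16 := by
    calc ∑ s, ν s * g s ^ 2 ≤ ∑ s, ν s * (E / 4) ^ 2 := by
          apply Finset.sum_le_sum
          intro s _
          apply mul_le_mul_of_nonneg_left _ (hνfull s).le
          calc g s ^ 2 = |g s| ^ 2 := (sq_abs _).symm
            _ ≤ (E / 4) ^ 2 := by
                apply pow_le_pow_left₀ (abs_nonneg _) (hgB s)
      _ = (E / 4) ^ 2 := by rw [← Finset.sum_mul, hνsum, one_mul]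
      _ = E ^ 2 / 16 := by ring
  -- apply the hypothesis to ν
  have hνne : ν ≠ π := by rw [hνdef]; exact hmune t ht
  have hδν := hδ ν hνprob hνfull hνne
  set L : ℝ := Filter.liminf (fun n : ℕ => -(1 / (n : ℝ)) * Real.log
      (⨆ i : Fin (M + 1), probOf (pAtMost ν π i) {y | δ n y ≠ i})) Filter.atTop with hLdef
  have hL : 0 < L := hδν
  have hev2 : ∀ᶠ n : ℕ in Filter.atTop, L / 2 < -(1 / (n : ℝ)) * Real.log
      (⨆ i : Fin (M + 1), probOf (pAtMost ν π i) {y | δ n y ≠ i}) :=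
    Filter.eventually_lt_of_lt_liminf (by rw [hLdef] at hL ⊢; linarith) (hbdd ν hνprob)
  have hev3 : ∀ᶠ n : ℕ in Filter.atTop, 4 ≤ n := Filter.eventually_ge_atTop 4
  have hev4 : ∀ᶠ n : ℕ in Filter.atTop, Real.exp (-((n:ℝ) * E) / 2) ≤ 1/4 := by
    rw [Filter.eventually_atTop]
    refine ⟨⌈(2 * Real.log 4) / E⌉₊, fun n hn => ?_⟩
    have h1 : (2 * Real.log 4) / E ≤ (n : ℝ) :=
      le_trans (Nat.le_ceil _) (Nat.cast_le.mpr hn)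
    have h2 : 2 * Real.log 4 ≤ (n:ℝ) * E := by
      rw [div_le_iff₀ hE] at h1; linarith
    have h3 : -((n:ℝ) * E) / 2 ≤ -Real.log 4 := by linarith
    calc Real.exp (-((n:ℝ)*E)/2) ≤ Real.exp (-Real.log 4) := Real.exp_le_exp.mpr h3
      _ = 1/4 := by rw [Real.exp_neg, Real.exp_log (by norm_num : (0:ℝ) < 4)]; norm_num
  have hev5 : ∀ᶠ n : ℕ in Filter.atTop, Real.log 2 / (n:ℝ) < L / 2 := by
    rw [Filter.eventually_atTop]
    refine ⟨⌈(2 * Real.log 2) / L⌉₊ + 1, fun n hn => ?_⟩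
    have hnposn : 0 < n := by omega
    have hnp : (0:ℝ) < (n:ℝ) := by exact_mod_cast hnposn
    have hx := Nat.le_ceil ((2 * Real.log 2) / L)
    have h2 : ((⌈(2 * Real.log 2) / L⌉₊ : ℝ) + 1) ≤ (n:ℝ) := by exact_mod_cast hn
    have h1 : (2 * Real.log 2) / L < (n:ℝ) := by linarith
    rw [div_lt_iff₀ hL] at h1
    rw [div_lt_iff₀ hnp]
    linarith
  obtain ⟨n, hn1, hn2, hn3, hn4, hn5⟩ :=
    (hev1.and (hev2.and (hev3.and (hev4.and hev5)))).exists
  have hnR : (4:ℝ) ≤ (n:ℝ) := by exact_mod_cast hn3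
  have hnpos : (0:ℝ) < (n:ℝ) := by linarith
  set P : (Fin n → Fin M → 𝓨) → ℝ := pAtMost ν π 1 with hPdef
  set P0 : (Fin n → Fin M → 𝓨) → ℝ := pAtMost ν π 0 with hP0def
  set Z : Set (Fin n → Fin M → 𝓨) := {y | δ n y ≠ 0} with hZdef
  set A : Set (Fin n → Fin M → 𝓨) := {y | δ n y ≠ 1} with hAdef
  set Sg : (Fin n → Fin M → 𝓨) → ℝ := fun y => ∑ k, g (y k j₀) with hSgdef
  set c : ℝ := (n:ℝ) * E / 4 with hcdef
  have hc : 0 < c := div_pos (mul_pos hnpos hE) (by norm_num)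
  set G : Set (Fin n → Fin M → 𝓨) := {y | -c ≤ Sg y} with hGdef
  have hPnn : ∀ y, 0 ≤ P y := pAtMost_nonneg ν π (fun s => (hνfull s).le) hπ0 1
  have hP0nn : ∀ y, 0 ≤ P0 y := pAtMost_nonneg ν π (fun s => (hνfull s).le) hπ0 0
  -- step 1 : the null error probability is exponentially small
  have hZbound : probOf P0 Z ≤ Real.exp (-((n:ℝ) * E)) := by
    set S0 := ⨆ i : Fin (M + 1), probOf (pAtMost (M := M) (n := n) (mu t₀) π i) {y | δ n y ≠ i}
      with hS0def
    have hS0ge : probOf (pAtMost (M := M) (n := n) (mu t₀) π 0) {y | δ n y ≠ 0} ≤ S0 :=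
      le_ciSup (f := fun i : Fin (M+1) =>
        probOf (pAtMost (M := M) (n := n) (mu t₀) π i) {y | δ n y ≠ i})
        (Set.Finite.bddAbove (Set.finite_range _)) 0
    have hS00 : 0 ≤ S0 := le_trans (probOf_nonneg
      (pAtMost_nonneg _ π (fun s => le_of_lt (hmufull t₀ ht₀ ht₀b s)) hπ0 0) _) hS0ge
    have hlogS0 : Real.log S0 < -((n:ℝ)*E) := by
      have h1 : (1/(n:ℝ)) * Real.log S0 < -E := by
        have h0 := hn1
        linarith
      calc Real.log S0 = (n:ℝ) * ((1/(n:ℝ)) * Real.log S0) := by field_simp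
        _ < (n:ℝ) * (-E) := mul_lt_mul_of_pos_left h1 hnpos
        _ = -((n:ℝ)*E) := by ring
    have hS0pos : 0 < S0 := by
      rcases eq_or_lt_of_le hS00 with h|h
      · exfalso
        rw [← h, Real.log_zero] at hlogS0
        linarith [mul_pos hnpos hE]
      · exact h
    have hS0lt : S0 < Real.exp (-((n:ℝ)*E)) := by
      rw [← Real.exp_log hS0pos]
      exact Real.exp_lt_exp.mpr hlogS0
    have heqP : pAtMost (M := M) (n := n) (mu t₀) π 0 = pAtMost (M := M) (n := n) ν π 0 :=
      funext (fun y => pAtMost_zero (mu t₀) ν π y)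
    calc probOf P0 Z = probOf (pAtMost (M := M) (n := n) (mu t₀) π 0) {y | δ n y ≠ 0} := by
          rw [hP0def, hZdef, heqP]
      _ ≤ S0 := hS0ge
      _ ≤ Real.exp (-((n:ℝ)*E)) := hS0lt.le
  -- step 2 : Chebyshev bound
  have hchebpt : ∀ y, Gᶜ.indicator P y ≤ P y * Sg y ^ 2 / c ^ 2 := by
    intro y
    rw [Set.indicator_apply]
    split_ifs with hy
    · have hylt : Sg y < -c := by
        simp only [hGdef, Set.mem_compl_iff, Set.mem_setOf_eq, not_le] at hy
        exact hy
      have h1 : c ^ 2 ≤ Sg y ^ 2 := by nlinarith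
      calc P y = P y * c ^ 2 / c ^ 2 := by field_simp
        _ ≤ P y * Sg y ^ 2 / c ^ 2 := by
            apply div_le_div_of_nonneg_right ?_ (by positivity)
            exact mul_le_mul_of_nonneg_left h1 (hPnn y)
    · exact div_nonneg (mul_nonneg (hPnn y) (sq_nonneg _)) (sq_nonneg c)
  have hcheb : probOf P Gᶜ ≤ 1/(n:ℝ) := by
    have hsum : probOf P Gᶜ ≤ ∑ y, P y * Sg y ^ 2 / c ^ 2 :=
      Finset.sum_le_sum (fun y _ => hchebpt y)
    have h2 : ∑ y, P y * Sg y ^ 2 / c ^ 2 = ((n:ℝ) * ∑ s, ν s * g s ^ 2) / c ^ 2 := by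
      rw [← Finset.sum_div]
      congr 1
      simp only [hPdef, hSgdef]
      exact second_moment ν π hνsum hπ1 hM1 j₀ hj₀ g hg0
    have h3 : ((n:ℝ) * ∑ s, ν s * g s ^ 2) / c ^ 2 ≤ ((n:ℝ) * (E ^ 2 / 16)) / c ^ 2 := by
      apply div_le_div_of_nonneg_right ?_ (by positivity)
      exact mul_le_mul_of_nonneg_left hVg hnpos.le
    have h4 : ((n:ℝ) * (E ^ 2 / 16)) / c ^ 2 = 1/(n:ℝ) := by
      rw [hcdef]
      field_simp
      ring
    calc probOf P Gᶜ ≤ ∑ y, P y * Sg y ^ 2 / c ^ 2 := hsum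
      _ = ((n:ℝ) * ∑ s, ν s * g s ^ 2) / c ^ 2 := h2
      _ ≤ ((n:ℝ) * (E ^ 2 / 16)) / c ^ 2 := h3
      _ = 1/(n:ℝ) := h4
  have hGc : probOf P Gᶜ ≤ 1/4 :=
    le_trans hcheb (by
      rw [div_le_div_iff₀ hnpos (by norm_num)]
      linarith)
  have htot : probOf P G + probOf P Gᶜ = 1 := by
    unfold probOf
    rw [← Finset.sum_add_distrib]
    have hpt : ∀ y, G.indicator P y + Gᶜ.indicator P y = P y := fun y => by
      have := congrFun (Set.indicator_self_add_compl G P) y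
      simpa using this
    rw [Finset.sum_congr rfl (fun y _ => hpt y), hPdef]
    exact pAtMost_sum_one ν π hνsum hπ1 1
  have hG : 3/4 ≤ probOf P G := by linarith
  -- step 3 : change of measure on G
  have hmlow : -(E/8) ≤ m := (abs_le.mp hmB).1
  have hratio : ∀ y : Fin n → Fin M → 𝓨, y ∈ G → P y ≤ Real.exp ((n:ℝ)*E/2) * P0 y := by
    intro y hyG
    have hSf : ∑ k, f (y k j₀) = Sg y + (n:ℝ) * m := by
      rw [hSgdef]
      simp only [hgdef]
      rw [Finset.sum_sub_distrib, Finset.sum_const, Finset.card_univ, Fintype.card_fin,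
        nsmul_eq_mul]
      ring
    have hSgy : -c ≤ Sg y := hyG
    have hnm : -((n:ℝ) * (E/8)) ≤ (n:ℝ) * m := by
      have h := mul_le_mul_of_nonneg_left hmlow hnpos.le
      have h' : (n:ℝ) * (-(E/8)) = -((n:ℝ) * (E/8)) := by ring
      linarith
    have hSfge : -((n:ℝ)*E/2) ≤ ∑ k, f (y k j₀) := by
      rw [hSf]
      have hSgy' : -(((n:ℝ)*E)/4) ≤ Sg y := by rw [hcdef] at hSgy; linarith
      have e1 : (n:ℝ) * (E/8) = ((n:ℝ)*E)/8 := by ring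
      linarith
    have hkey : P y * Real.exp (∑ k, f (y k j₀)) = P0 y := by
      rw [hPdef, hP0def]
      simp only [hfdef]
      exact pAtMost_ratio ν π hνfull hπf hM1 j₀ hj₀ y
    have hPeq : P y = P0 y * Real.exp (-(∑ k, f (y k j₀))) := by
      rw [Real.exp_neg, ← hkey]
      field_simp
    rw [hPeq]
    have h3 : Real.exp (-(∑ k, f (y k j₀))) ≤ Real.exp ((n:ℝ)*E/2) :=
      Real.exp_le_exp.mpr (by linarith)
    calc P0 y * Real.exp (-(∑ k, f (y k j₀))) ≤ P0 y * Real.exp ((n:ℝ)*E/2) :=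
          mul_le_mul_of_nonneg_left h3 (hP0nn y)
      _ = Real.exp ((n:ℝ)*E/2) * P0 y := mul_comm _ _
  have hGZ : probOf P (G ∩ Z) ≤ 1/4 := by
    have hpt : ∀ y, (G ∩ Z).indicator P y
        ≤ Z.indicator (fun y => Real.exp ((n:ℝ)*E/2) * P0 y) y := by
      intro y
      rw [Set.indicator_apply, Set.indicator_apply]
      split_ifs with h1 h2
      · exact hratio y h1.1
      · exact absurd h1.2 h2
      · exact mul_nonneg (Real.exp_pos _).le (hP0nn y)
      · exact le_refl 0
    have hsum : probOf P (G ∩ Z)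
        ≤ ∑ y, Z.indicator (fun y => Real.exp ((n:ℝ)*E/2) * P0 y) y :=
      Finset.sum_le_sum (fun y _ => hpt y)
    have h2 : ∑ y, Z.indicator (fun y => Real.exp ((n:ℝ)*E/2) * P0 y) y
        = Real.exp ((n:ℝ)*E/2) * probOf P0 Z := by
      unfold probOf
      rw [Finset.mul_sum]
      apply Finset.sum_congr rfl
      intro y _
      rw [Set.indicator_apply, Set.indicator_apply]
      split_ifs <;> simp
    calc probOf P (G ∩ Z) ≤ _ := hsum
      _ = Real.exp ((n:ℝ)*E/2) * probOf P0 Z := h2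
      _ ≤ Real.exp ((n:ℝ)*E/2) * Real.exp (-((n:ℝ)*E)) :=
          mul_le_mul_of_nonneg_left hZbound (Real.exp_pos _).le
      _ = Real.exp (-((n:ℝ)*E)/2) := by rw [← Real.exp_add]; congr 1; ring
      _ ≤ 1/4 := hn4
  -- step 4 : the error under hypothesis 1 is at least 1/2
  have h01 : (0 : Fin (M+1)) ≠ 1 := by
    intro h01
    have h01' : ((0 : Fin (M+1)) : ℕ) = ((1 : Fin (M+1)) : ℕ) := by rw [h01]
    rw [Fin.val_zero, Fin.val_one', Nat.mod_eq_of_lt (by omega : 1 < M + 1)] at h01'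
    omega
  have hApt : ∀ y, G.indicator P y ≤ A.indicator P y + (G ∩ Z).indicator P y := by
    intro y
    rw [Set.indicator_apply, Set.indicator_apply, Set.indicator_apply]
    by_cases hyG : y ∈ G
    · rw [if_pos hyG]
      by_cases hyZ : y ∈ Z
      · rw [if_pos (Set.mem_inter hyG hyZ)]
        have hnn : (0:ℝ) ≤ if y ∈ A then P y else 0 := by
          split_ifs
          · exact hPnn y
          · exact le_refl 0
        linarith
      · have hy0 : δ n y = 0 := by
          have : ¬ (δ n y ≠ 0) := hyZ
          exact not_not.mp this
        have hyA : y ∈ A := by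
          show δ n y ≠ 1
          rw [hy0]
          exact h01
        rw [if_pos hyA]
        have hnn : (0:ℝ) ≤ if y ∈ G ∩ Z then P y else 0 := by
          split_ifs
          · exact hPnn y
          · exact le_refl 0
        linarith
    · rw [if_neg hyG]
      have hnn1 : (0:ℝ) ≤ if y ∈ A then P y else 0 := by
        split_ifs
        · exact hPnn y
        · exact le_refl 0
      have hnn2 : (0:ℝ) ≤ if y ∈ G ∩ Z then P y else 0 := by
        split_ifs
        · exact hPnn y
        · exact le_refl 0
      linarith
  have hAsum : probOf P G ≤ probOf P A + probOf P (G ∩ Z) := by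
    unfold probOf
    rw [← Finset.sum_add_distrib]
    exact Finset.sum_le_sum (fun y _ => hApt y)
  have hA : 1/2 ≤ probOf P A := by linarith
  -- final contradiction
  rw [hPdef, hAdef] at hA
  set Sstar := ⨆ i : Fin (M + 1), probOf (pAtMost (M := M) (n := n) ν π i) {y | δ n y ≠ i}
    with hSsdef
  have hSstar : 1/2 ≤ Sstar :=
    le_trans hA (le_ciSup (f := fun i : Fin (M+1) =>
      probOf (pAtMost (M := M) (n := n) ν π i) {y | δ n y ≠ i})
      (Set.Finite.bddAbove (Set.finite_range _)) 1)
  have hlogS : -Real.log Sstar ≤ Real.log 2 := by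
    have h1 : Real.log (1/2) ≤ Real.log Sstar :=
      Real.log_le_log (by norm_num) hSstar
    rw [one_div, Real.log_inv] at h1
    linarith
  have hfin : -(1/(n:ℝ)) * Real.log Sstar ≤ Real.log 2 / (n:ℝ) := by
    have h2 : (0:ℝ) ≤ 1/(n:ℝ) := by positivity
    calc -(1/(n:ℝ)) * Real.log Sstar = (1/(n:ℝ)) * (-Real.log Sstar) := by ring
      _ ≤ (1/(n:ℝ)) * Real.log 2 := mul_le_mul_of_nonneg_left hlogS h2
      _ = Real.log 2 / (n:ℝ) := by ring
  linarith
end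
end
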